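/- Let W be an m×n real matrix and let λ₁, …, λₙ ≥ 0 be the eigenvalues (with multiplicity) of the positive semidefinite matrix WᵀW. Then for every real p×n matrix A of full column rank n, ‖A‖₂² · trace(WᵀW (AᵀA)⁻¹) ≥ (1/n) · (∑ᵢ₌₁ⁿ √λᵢ)², where ‖A‖₂ is the maximum Euclidean column norm of A. (Equivalently, the optimal total error of the (ε,δ)-matrix mechanism on workload W is at least P(ε,δ)·(1/n)(∑ᵢ σᵢ)², where σᵢ = √λᵢ are the singular values of W and P(ε,δ) = 2 log(2/δ)/ε².) -/

import Mathlib

open Matrix BigOperators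

private lemma sym_apply {n : ℕ} {B : Matrix (Fin n) (Fin n) ℝ} (hB : B.IsHermitian)
    (i j : Fin n) : B j i = B i j := by
  conv_lhs => rw [← hB]
  simp [Matrix.conjTranspose_apply]

private lemma psd_sym {n : ℕ} {B : Matrix (Fin n) (Fin n) ℝ} (hB : B.IsHermitian)
    (x y : Fin n → ℝ) : x ⬝ᵥ B *ᵥ y = y ⬝ᵥ B *ᵥ x := by
  simp only [dotProduct, Matrix.mulVec, Finset.mul_sum]
  rw [Finset.sum_comm]
  exact Finset.sum_congr rfl fun i _ => Finset.sum_congr rfl fun j _ => by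
    rw [sym_apply hB i j]; ring

private lemma psd_cs {n : ℕ} {B : Matrix (Fin n) (Fin n) ℝ} (hB : B.PosSemidef)
    (x y : Fin n → ℝ) :
    (x ⬝ᵥ B *ᵥ y) ^ 2 ≤ (x ⬝ᵥ B *ᵥ x) * (y ⬝ᵥ B *ᵥ y) := by
  have key : ∀ t : ℝ, 0 ≤ (y ⬝ᵥ B *ᵥ y) * (t * t) + (2 * (x ⬝ᵥ B *ᵥ y)) * t + x ⬝ᵥ B *ᵥ x := by
    intro t
    have h0 := hB.dotProduct_mulVec_nonneg (x + t • y)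
    rw [star_trivial] at h0
    have hexp : (x + t • y) ⬝ᵥ B *ᵥ (x + t • y)
        = (y ⬝ᵥ B *ᵥ y) * (t * t) + (2 * (x ⬝ᵥ B *ᵥ y)) * t + x ⬝ᵥ B *ᵥ x := by
      rw [Matrix.mulVec_add, Matrix.mulVec_smul, add_dotProduct,
        smul_dotProduct, dotProduct_add, dotProduct_smul,
        dotProduct_add, dotProduct_smul, psd_sym hB.1 y x]
      simp only [smul_eq_mul]
      ring
    rw [hexp] at h0
    exact h0
  have hd := discrim_le_zero key
  rw [discrim] at hd
  nlinarith [hd]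

theorem singular_value_bound (m n : ℕ) (hn : 0 < n)
    (W : Matrix (Fin m) (Fin n) ℝ) (lam : Fin n → ℝ) (hlam : ∀ i, 0 ≤ lam i)
    (P : Matrix (Fin n) (Fin n) ℝ) (hP : P * Pᵀ = 1)
    (hdiag : Wᵀ * W = P * Matrix.diagonal lam * Pᵀ) :
    ∀ (p : ℕ) (A : Matrix (Fin p) (Fin n) ℝ), A.rank = n →
      (⨆ j, Real.sqrt (∑ i, (A i j) ^ 2)) ^ 2 * Matrix.trace (Wᵀ * W * (Aᵀ * A)⁻¹)
        ≥ (1 / n : ℝ) * (∑ i, Real.sqrt (lam i)) ^ 2 := by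
  intro p A hA
  classical
  set B := Aᵀ * A with hBdef
  have hBpsd : B.PosSemidef := by
    have := Matrix.posSemidef_conjTranspose_mul_self A
    rwa [Matrix.conjTranspose_eq_transpose_of_trivial] at this
  -- kernel of A is trivial, hence B is invertible
  have hker : LinearMap.ker A.mulVecLin = ⊥ := by
    have h1 := LinearMap.finrank_range_add_finrank_ker A.mulVecLin
    have h2 : Module.finrank ℝ (LinearMap.range A.mulVecLin) = n := hA
    rw [h2, show Module.finrank ℝ (Fin n → ℝ) = n by simp] at h1
    exact Submodule.finrank_eq_zero.mp (by omega)
  have hdet : B.det ≠ 0 := by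
    intro h
    obtain ⟨v, hv, hv0⟩ := Matrix.exists_mulVec_eq_zero_iff.mpr h
    have hAv : A *ᵥ v = 0 := by
      have h2 : v ⬝ᵥ B *ᵥ v = 0 := by rw [hv0, dotProduct_zero]
      have h3 : v ⬝ᵥ B *ᵥ v = (A *ᵥ v) ⬝ᵥ (A *ᵥ v) := by
        rw [hBdef, ← Matrix.mulVec_mulVec, Matrix.dotProduct_mulVec, Matrix.vecMul_transpose]
      rw [h3] at h2
      exact dotProduct_self_eq_zero.mp h2
    have hmem : v ∈ LinearMap.ker A.mulVecLin := by
      rw [LinearMap.mem_ker, Matrix.mulVecLin_apply]; exact hAv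
    rw [hker, Submodule.mem_bot] at hmem
    exact hv hmem
  have hBB : B * B⁻¹ = 1 := Matrix.mul_nonsing_inv B (isUnit_iff_ne_zero.mpr hdet)
  have hBinv : (B⁻¹).PosSemidef := hBpsd.inv
  have hPtP : Pᵀ * P = 1 := mul_eq_one_comm.mp hP
  -- columns of P
  set q : Fin n → (Fin n → ℝ) := fun i k => P k i with hq
  have hone : ∀ i, q i ⬝ᵥ q i = 1 := by
    intro i
    have h := congrFun (congrFun hPtP i) i
    simpa [Matrix.mul_apply, dotProduct, Matrix.one_apply, hq,
      Matrix.transpose_apply] using h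
  set a : Fin n → ℝ := fun i => q i ⬝ᵥ B *ᵥ q i with ha
  set c : Fin n → ℝ := fun i => q i ⬝ᵥ B⁻¹ *ᵥ q i with hc
  have ha0 : ∀ i, 0 ≤ a i := fun i => by
    have := hBpsd.dotProduct_mulVec_nonneg (q i); rwa [star_trivial] at this
  have hc0 : ∀ i, 0 ≤ c i := fun i => by
    have := hBinv.dotProduct_mulVec_nonneg (q i); rwa [star_trivial] at this
  -- Cauchy-Schwarz: 1 ≤ a i * c i
  have hac : ∀ i, 1 ≤ a i * c i := by
    intro i
    have hcs := psd_cs hBpsd (q i) (B⁻¹ *ᵥ q i)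
    have e1 : q i ⬝ᵥ B *ᵥ (B⁻¹ *ᵥ q i) = 1 := by
      rw [Matrix.mulVec_mulVec, hBB, Matrix.one_mulVec, hone]
    have e2 : (B⁻¹ *ᵥ q i) ⬝ᵥ B *ᵥ (B⁻¹ *ᵥ q i) = c i := by
      rw [Matrix.mulVec_mulVec, hBB, Matrix.one_mulVec, dotProduct_comm]
    rw [e1, e2, one_pow] at hcs
    exact hcs
  -- trace identities
  have htrB : Matrix.trace B = ∑ i, a i := by
    have h1 : Matrix.trace B = Matrix.trace (Pᵀ * B * P) := by
      rw [Matrix.trace_mul_cycle, ← Matrix.mul_assoc, hP, Matrix.one_mul]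
    rw [h1]
    simp only [Matrix.trace, Matrix.diag_apply, Matrix.mul_apply, Matrix.transpose_apply,
      ha, hq, dotProduct, Matrix.mulVec, Finset.sum_mul, Finset.mul_sum]
    refine Finset.sum_congr rfl fun i _ => ?_
    rw [Finset.sum_comm]
    exact Finset.sum_congr rfl fun k _ => Finset.sum_congr rfl fun l _ => by ring
  have hXii : ∀ i, (Pᵀ * B⁻¹ * P) i i = c i := by
    intro i
    simp only [Matrix.mul_apply, Matrix.transpose_apply, hc, hq, dotProduct,
      Matrix.mulVec, Finset.sum_mul, Finset.mul_sum]
    rw [Finset.sum_comm]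
    exact Finset.sum_congr rfl fun k _ => Finset.sum_congr rfl fun l _ => by ring
  have htrT : Matrix.trace (Wᵀ * W * B⁻¹) = ∑ i, lam i * c i := by
    have h1 : Wᵀ * W * B⁻¹ = P * (Matrix.diagonal lam * (Pᵀ * B⁻¹)) := by
      rw [hdiag]; noncomm_ring
    have h2 : Matrix.diagonal lam * (Pᵀ * B⁻¹) * P = Matrix.diagonal lam * (Pᵀ * B⁻¹ * P) :=
      Matrix.mul_assoc _ _ _
    rw [h1, Matrix.trace_mul_comm, h2, Matrix.trace]
    refine Finset.sum_congr rfl fun i _ => ?_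
    rw [Matrix.diag_apply, Matrix.diagonal_mul, hXii i]
  -- the sup bound
  set f : Fin n → ℝ := fun j => Real.sqrt (∑ i, (A i j) ^ 2) with hf
  have hfS : ∀ j, ∑ i, (A i j) ^ 2 ≤ (⨆ j, f j) ^ 2 := by
    intro j
    have hb : BddAbove (Set.range f) := (Set.finite_range f).bddAbove
    have h1 : f j ≤ ⨆ j, f j := le_ciSup hb j
    have h2 : (f j) ^ 2 ≤ (⨆ j, f j) ^ 2 := pow_le_pow_left₀ (Real.sqrt_nonneg _) h1 2
    rwa [hf, Real.sq_sqrt (Finset.sum_nonneg fun i _ => sq_nonneg _)] at h2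
  have hBjj : ∀ j, B j j = ∑ i, (A i j) ^ 2 := by
    intro j
    simp [hBdef, Matrix.mul_apply, Matrix.transpose_apply, sq]
  have htrBS : Matrix.trace B ≤ (n : ℝ) * (⨆ j, f j) ^ 2 := by
    rw [Matrix.trace]
    calc ∑ j, B.diag j ≤ ∑ _j : Fin n, (⨆ j, f j) ^ 2 := by
          refine Finset.sum_le_sum fun j _ => ?_
          rw [Matrix.diag_apply, hBjj j]; exact hfS j
      _ = (n : ℝ) * (⨆ j, f j) ^ 2 := by simp [Finset.sum_const, nsmul_eq_mul]
  -- sum Cauchy-Schwarz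
  set r : Fin n → ℝ := fun i => Real.sqrt (a i * (lam i * c i)) with hr
  have hlr : ∀ i, Real.sqrt (lam i) ≤ r i := by
    intro i
    apply Real.sqrt_le_sqrt
    calc lam i = lam i * 1 := (mul_one _).symm
      _ ≤ lam i * (a i * c i) := mul_le_mul_of_nonneg_left (hac i) (hlam i)
      _ = a i * (lam i * c i) := by ring
  have hsum : (∑ i, r i) ^ 2 ≤ (∑ i, a i) * (∑ i, lam i * c i) := by
    refine Finset.sum_sq_le_sum_mul_sum_of_sq_eq_mul _ (fun i _ => ha0 i)
      (fun i _ => mul_nonneg (hlam i) (hc0 i)) (fun i _ => ?_)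
    rw [hr, Real.sq_sqrt (mul_nonneg (ha0 i) (mul_nonneg (hlam i) (hc0 i)))]
  have hL : (∑ i, Real.sqrt (lam i)) ^ 2 ≤ (∑ i, r i) ^ 2 := by
    apply pow_le_pow_left₀ (Finset.sum_nonneg fun i _ => Real.sqrt_nonneg _)
    exact Finset.sum_le_sum fun i _ => hlr i
  have hT0 : 0 ≤ ∑ i, lam i * c i :=
    Finset.sum_nonneg fun i _ => mul_nonneg (hlam i) (hc0 i)
  have hfinal : (∑ i, Real.sqrt (lam i)) ^ 2
      ≤ (n : ℝ) * (⨆ j, f j) ^ 2 * (∑ i, lam i * c i) := by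
    calc (∑ i, Real.sqrt (lam i)) ^ 2 ≤ (∑ i, a i) * (∑ i, lam i * c i) := hL.trans hsum
      _ ≤ (n : ℝ) * (⨆ j, f j) ^ 2 * (∑ i, lam i * c i) := by
          refine mul_le_mul_of_nonneg_right ?_ hT0
          rw [← htrB]; exact htrBS
  have hn' : (0:ℝ) < n := by exact_mod_cast hn
  rw [ge_iff_le, htrT]
  show (1 / n : ℝ) * (∑ i, Real.sqrt (lam i)) ^ 2 ≤ (⨆ j, f j) ^ 2 * (∑ i, lam i * c i)
  rw [div_mul_eq_mul_div, one_mul, div_le_iff₀ hn']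
  nlinarith [hfinal]
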